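/- Let n, k, d be positive integers, ε > 0, and 0 < δ < 1/2. Let Σ = {1,…,d+1} ∪ {⊥}. For every deterministic owner O (for k rounds of (ε,δ)-concentrated functions {0,1}^n → ℝ^d) there exists a (k,n,Σ) block decision tree T_O such that: (1) for every w ∈ Σ^{<k}, Pr_{X uniform on {0,1}^n}[v_w(X) = ⊥] ≤ δ; and (2) for all X_1,…,X_k ∈ {0,1}^n, if no coordinate of T_O(X_1,…,X_k) ∈ Σ^k equals ⊥, then in the interaction O ↔ S₀(X_1,…,X_k) one has max_{1≤i≤k} ‖Y_i − μ_i‖_∞ ≤ (3d+5)ε. -/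

import Mathlib

open Classical

/-- Probability of `P` under the uniform distribution on a finite type. -/
noncomputable def pr {α : Type*} [Fintype α] (P : α → Prop) : ℝ :=
  ((Finset.univ.filter P).card : ℝ) / (Fintype.card α : ℝ)

/-- `f : {0,1}^n → ℝ^d` is `(ε,δ)`-concentrated at `μ`. -/
def Concentrated (n d : ℕ) (ε δ : ℝ)
    (f : (Fin n → Bool) → Fin d → ℝ) (μ : Fin d → ℝ) : Prop :=
  pr (fun X : Fin n → Bool => ∃ j, |f X j - μ j| > ε) ≤ δ

/-- A deterministic owner for `k` rounds of `(ε,δ)`-concentrated functions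
`{0,1}^n → ℝ^d`: given the history of responses `Y_1,…,Y_{i-1}`, it produces
a function `f_i` together with a point `μ_i` at which `f_i` is concentrated. -/
structure Owner (n k d : ℕ) (ε δ : ℝ) where
  act : List (Fin d → ℝ) → (((Fin n → Bool) → Fin d → ℝ) × (Fin d → ℝ))
  conc : ∀ ys : List (Fin d → ℝ), ys.length < k →
    Concentrated n d ε δ (act ys).1 (act ys).2

/-- A one-query steward with randomness complexity `m`: in each round it chooses
a query point from its randomness and the past query answers, and it chooses a
response from its randomness and the past and current query answers. -/
structure Steward (n k d m : ℕ) where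
  q : (Fin m → Bool) → List (Fin d → ℝ) → (Fin n → Bool)
  r : (Fin m → Bool) → List (Fin d → ℝ) → (Fin d → ℝ) → (Fin d → ℝ)

/-- The interaction `O ↔ S(Z)` for `i` rounds: the list of triples `(Y_i, W_i, μ_i)`. -/
noncomputable def run {n k d m : ℕ} {ε δ : ℝ} (O : Owner n k d ε δ) (S : Steward n k d m)
    (Z : Fin m → Bool) : ℕ → List ((Fin d → ℝ) × (Fin d → ℝ) × (Fin d → ℝ))
  | 0 => []
  | i + 1 =>
    let h := run O S Z i
    let fμ := O.act (h.map fun p => p.1)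
    let X := S.q Z (h.map fun p => p.2.1)
    let W := fμ.1 X
    h ++ [(S.r Z (h.map fun p => p.2.1) W, W, fμ.2)]

/-- `S` is a one-query `(ε',δ')`-steward for `k` adaptively chosen
`(ε,δ)`-concentrated functions `{0,1}^n → ℝ^d`. -/
def IsSteward (n k d m : ℕ) (ε δ ε' δ' : ℝ) (S : Steward n k d m) : Prop :=
  ∀ O : Owner n k d ε δ,
    pr (fun Z : Fin m → Bool =>
      ∃ p ∈ run O S Z k, ∃ j : Fin d, |p.1 j - p.2.2 j| > ε') ≤ δ'

/-- Rounds `x` to the midpoint of the half-open interval `[L·m, L·(m+1))` containing it. -/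
noncomputable def roundMid (L x : ℝ) : ℝ := L * ⌊x / L⌋ + L / 2

/-- The least `Δ ∈ {1,…,d₀+1}` such that, for every coordinate `j` in block `t`
(the blocks being the consecutive runs of `d₀` coordinates), the interval
`[W_j + (2Δ−1)ε, W_j + (2Δ+1)ε]` is contained in a single half-open interval
`[2ε(d₀+1)·m, 2ε(d₀+1)·(m+1))`. -/
noncomputable def shiftBlock (d d₀ : ℕ) (ε : ℝ) (W : Fin d → ℝ) (t : ℕ) : ℕ :=
  sInf {Δ : ℕ | 1 ≤ Δ ∧ Δ ≤ d₀ + 1 ∧ ∀ j : Fin d, (j : ℕ) / d₀ = t →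
    ∃ m : ℤ, 2 * ε * (d₀ + 1) * m ≤ W j + (2 * Δ - 1) * ε ∧
      W j + (2 * Δ + 1) * ε < 2 * ε * (d₀ + 1) * (m + 1)}

/-- The interaction `O ↔ S₀(X_1,…,X_k)` with the (generalized) shifting-and-rounding
steward `S₀` (block size `d₀`): the list of pairs `(Y_i, μ_i)`. In round `i`,
`S₀` queries `f_i` at the fresh random point `X_i`, shifts each block of `d₀`
coordinates of `W_i = f_i(X_i)` by `2·Δ_{it}·ε`, and rounds each coordinate to the
midpoint of the length-`2ε(d₀+1)` half-open interval containing it. -/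
noncomputable def runS0 (n d d₀ k : ℕ) (ε δ : ℝ) (O : Owner n k d ε δ)
    (Xs : List (Fin n → Bool)) : List ((Fin d → ℝ) × (Fin d → ℝ)) :=
  Xs.foldl (fun h X =>
    let fμ := O.act (h.map Prod.fst)
    let W := fμ.1 X
    h ++ [(fun j : Fin d =>
      roundMid (2 * ε * (d₀ + 1)) (W j + 2 * (shiftBlock d d₀ ε W ((j : ℕ) / d₀)) * ε),
      fμ.2)]) []

/-- The output string of a `(k,n,Σ)` block decision tree, given as the family of
node functions `v_w` indexed by strings `w`, on input the list `Xs` of blocks: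
`σ_i = v_{(σ_1,…,σ_{i-1})}(X_i)`. -/
def treeOutList {A I : Type*} (v : List A → I → A) (Xs : List I) : List A :=
  Xs.foldl (fun w X => w ++ [v w X]) []

/-- `Gen` is a `γ`-PRG for `(k,n,A)` block decision trees: for every tree, the total
variation distance between the output distribution on pseudorandom inputs and on
truly random inputs is at most `γ`. -/
def IsBDTPRG (n k s : ℕ) (A : Type*) [Fintype A] (γ : ℝ)
    (Gen : (Fin s → Bool) → Fin k → (Fin n → Bool)) : Prop :=
  ∀ v : List A → (Fin n → Bool) → A,
    (1 / 2) * ∑ σ : Fin k → A,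
      |pr (fun x : Fin s → Bool => treeOutList v (List.ofFn (Gen x)) = List.ofFn σ)
        - pr (fun X : Fin k → (Fin n → Bool) => treeOutList v (List.ofFn X) = List.ofFn σ)|
      ≤ γ

lemma floor_mul_le {L x : ℝ} (hL : 0 < L) : L * ⌊x / L⌋ ≤ x := by
  have := Int.floor_le (x / L)
  calc L * (⌊x / L⌋ : ℝ) ≤ L * (x / L) := by nlinarith
  _ = x := by field_simp

lemma lt_floor_mul {L x : ℝ} (hL : 0 < L) : x < L * (⌊x / L⌋ + 1) := by
  have := Int.lt_floor_add_one (x / L)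
  calc x = L * (x / L) := by field_simp
  _ < L * (⌊x / L⌋ + 1) := by nlinarith

lemma roundMid_sub_abs {L x : ℝ} (hL : 0 < L) : |roundMid L x - x| ≤ L / 2 := by
  have h1 := floor_mul_le (x := x) hL
  have h2 := lt_floor_mul (x := x) hL
  rw [abs_le, roundMid]
  constructor <;> nlinarith

lemma roundMid_eq {L x : ℝ} (m : ℤ) (hL : 0 < L) (h1 : L * m ≤ x) (h2 : x < L * (m + 1)) :
    roundMid L x = L * m + L / 2 := by
  have : ⌊x / L⌋ = m := by
    rw [Int.floor_eq_iff]
    constructor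
    · rw [le_div_iff₀ hL]; linarith
    · rw [div_lt_iff₀ hL]; linarith
  rw [roundMid, this]

lemma shift_set_nonempty (d : ℕ) (ε : ℝ) (hε : 0 < ε) (W : Fin d → ℝ) :
    {Δ : ℕ | 1 ≤ Δ ∧ Δ ≤ d + 1 ∧ ∀ j : Fin d, (j : ℕ) / d = 0 →
    ∃ m : ℤ, 2 * ε * (d + 1) * m ≤ W j + (2 * Δ - 1) * ε ∧
      W j + (2 * Δ + 1) * ε < 2 * ε * (d + 1) * (m + 1)}.Nonempty := by
  set L : ℝ := 2 * ε * (d + 1) with hLdef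
  have hL : 0 < L := by positivity
  set B : Fin d → ℕ := fun j =>
    ((⌈(L * (⌊(W j + ε) / L⌋ + 1) - W j - ε) / (2 * ε)⌉ : ℤ)).toNat with hB
  obtain ⟨Δ, hIcc, hnotmem⟩ : ∃ Δ ∈ Finset.Icc 1 (d + 1), Δ ∉ Finset.image B Finset.univ := by
    by_contra hcon
    push_neg at hcon
    have hsub : Finset.Icc 1 (d + 1) ⊆ Finset.image B Finset.univ := fun x hx => hcon x hx
    have h1 := Finset.card_le_card hsub
    have h2 : (Finset.image B Finset.univ).card ≤ d := by
      calc (Finset.image B Finset.univ).card ≤ Finset.univ.card := Finset.card_image_le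
      _ = d := by simp
    rw [Nat.card_Icc] at h1
    omega
  rw [Finset.mem_Icc] at hIcc
  refine ⟨Δ, hIcc.1, hIcc.2, fun j _ => ?_⟩
  have hΔR : (1 : ℝ) ≤ (Δ : ℝ) := by exact_mod_cast hIcc.1
  have hΔR2 : (Δ : ℝ) ≤ (d : ℝ) + 1 := by exact_mod_cast hIcc.2
  set m0 : ℤ := ⌊(W j + (2 * Δ - 1) * ε) / L⌋ with hm0
  have h1 : L * m0 ≤ W j + (2 * Δ - 1) * ε := floor_mul_le hL
  have h2 : W j + (2 * Δ - 1) * ε < L * (m0 + 1) := by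
    have := lt_floor_mul (x := W j + (2 * Δ - 1) * ε) hL
    push_cast at this ⊢; linarith
  by_cases hcase : W j + (2 * Δ + 1) * ε < L * (m0 + 1)
  · exact ⟨m0, h1, by push_cast; push_cast at hcase; linarith⟩
  exfalso
  push_neg at hcase
  have hfl : ⌊(W j + ε) / L⌋ = m0 := by
    rw [Int.floor_eq_iff]
    constructor
    · rw [le_div_iff₀ hL]
      have hub : W j + (2 * Δ + 1) * ε ≤ W j + ε + L := by
        rw [hLdef]; nlinarith
      push_cast; nlinarith
    · rw [div_lt_iff₀ hL]
      have : W j + ε ≤ W j + (2 * Δ - 1) * ε := by nlinarith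
      push_cast; push_cast at h2; linarith
  apply hnotmem
  rw [Finset.mem_image]
  refine ⟨j, Finset.mem_univ j, ?_⟩
  show (⌈(L * ((⌊(W j + ε) / L⌋ : ℝ) + 1) - W j - ε) / (2 * ε)⌉ : ℤ).toNat = Δ
  have hceil : (⌈(L * ((⌊(W j + ε) / L⌋ : ℝ) + 1) - W j - ε) / (2 * ε)⌉ : ℤ) = (Δ : ℤ) := by
    rw [hfl]
    have h2ε : (0:ℝ) < 2 * ε := by linarith
    apply le_antisymm
    · apply Int.ceil_le.2
      rw [div_le_iff₀ h2ε]
      push_cast; push_cast at hcase; nlinarith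
    · have hlt : ((Δ : ℤ) : ℝ) < (L * ((m0 : ℝ) + 1) - W j - ε) / (2 * ε) + 1 := by
        have hsub : ((Δ : ℝ)) - 1 < (L * ((m0 : ℝ) + 1) - W j - ε) / (2 * ε) := by
          rw [lt_div_iff₀ h2ε]
          push_cast at h2 ⊢
          nlinarith
        push_cast
        linarith
      have := Int.le_ceil ((L * ((m0 : ℝ) + 1) - W j - ε) / (2 * ε))
      have : ((Δ : ℤ) : ℝ) < ((⌈(L * ((m0 : ℝ) + 1) - W j - ε) / (2 * ε)⌉ : ℤ) : ℝ) + 1 := by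
        push_cast at *; linarith
      exact_mod_cast (by exact_mod_cast Int.lt_add_one_iff.mp (by exact_mod_cast this))
  rw [hceil]
  exact Int.toNat_natCast Δ

lemma shiftBlock_spec (d : ℕ) (ε : ℝ) (hε : 0 < ε) (W : Fin d → ℝ) :
    1 ≤ shiftBlock d d ε W 0 ∧ shiftBlock d d ε W 0 ≤ d + 1 ∧
    ∀ j : Fin d, ∃ m : ℤ,
      2 * ε * (d + 1) * m ≤ W j + (2 * (shiftBlock d d ε W 0 : ℝ) - 1) * ε ∧
      W j + (2 * (shiftBlock d d ε W 0 : ℝ) + 1) * ε < 2 * ε * (d + 1) * (m + 1) := by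
  have h := Nat.sInf_mem (shift_set_nonempty d ε hε W)
  obtain ⟨h1, h2, h3⟩ := h
  exact ⟨h1, h2, fun j => h3 j (Nat.div_eq_of_lt j.isLt)⟩

/-- Decode the history of steward responses from a string of tree symbols. -/
noncomputable def decodeYs {n k d : ℕ} {ε δ : ℝ} (O : Owner n k d ε δ)
    (w : List (Option (Fin (d + 1)))) : List (Fin d → ℝ) :=
  w.foldl (fun ys σ => ys ++ [fun j : Fin d =>
    match σ with
    | none => 0
    | some Δ => roundMid (2 * ε * (d + 1))
        ((O.act ys).2 j + 2 * (((Δ : ℕ) + 1 : ℕ) : ℝ) * ε)]) []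

/-- The node functions of the certification tree. -/
noncomputable def vtree {n k d : ℕ} {ε δ : ℝ} (O : Owner n k d ε δ)
    (w : List (Option (Fin (d + 1)))) (X : Fin n → Bool) : Option (Fin (d + 1)) :=
  if ∃ j, |(O.act (decodeYs O w)).1 X j - (O.act (decodeYs O w)).2 j| > ε then none
  else some ⟨(shiftBlock d d ε ((O.act (decodeYs O w)).1 X) 0 - 1) % (d + 1),
    Nat.mod_lt _ (Nat.succ_pos d)⟩

lemma foldl_append_length {A B : Type*} (g : List B → A → B) :
    ∀ (l : List A) (acc : List B),
      (l.foldl (fun ys a => ys ++ [g ys a]) acc).length = acc.length + l.length := by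
  intro l
  induction l with
  | nil => simp
  | cons a l ih =>
    intro acc
    rw [List.foldl_cons, ih]
    simp
    omega

lemma mem_foldl_append {A B : Type*} (g : List B → A → B) :
    ∀ (l : List A) (acc : List B) (x : B), x ∈ acc →
      x ∈ l.foldl (fun ys a => ys ++ [g ys a]) acc := by
  intro l
  induction l with
  | nil => intro acc x h; simpa using h
  | cons a l ih =>
    intro acc x h
    rw [List.foldl_cons]
    exact ih _ x (List.mem_append_left _ h)

lemma main_inv (n k d : ℕ) (ε δ : ℝ) (hε : 0 < ε) (O : Owner n k d ε δ) :
    ∀ (Xs : List (Fin n → Bool)) (w : List (Option (Fin (d + 1))))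
      (h : List ((Fin d → ℝ) × (Fin d → ℝ))),
      decodeYs O w = h.map Prod.fst →
      (∀ σ ∈ Xs.foldl (fun w X => w ++ [vtree O w X]) w, σ ≠ none) →
      (∀ p ∈ h, ∀ j : Fin d, |p.1 j - p.2 j| ≤ (3 * (d : ℝ) + 5) * ε) →
      ∀ p ∈ Xs.foldl (fun h X => h ++ [(fun j : Fin d =>
          roundMid (2 * ε * (d + 1))
            ((O.act (h.map Prod.fst)).1 X j +
              2 * (shiftBlock d d ε ((O.act (h.map Prod.fst)).1 X) ((j : ℕ) / d)) * ε),
          (O.act (h.map Prod.fst)).2)]) h,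
        ∀ j : Fin d, |p.1 j - p.2 j| ≤ (3 * (d : ℝ) + 5) * ε := by
  intro Xs
  induction Xs with
  | nil => intro w h hdec hnn hbd; simpa using hbd
  | cons X Xs ih =>
    intro w h hdec hnn hbd
    have hL : (0:ℝ) < 2 * ε * (d + 1) := by positivity
    set fμ := O.act (h.map Prod.fst) with hfμ
    set W : Fin d → ℝ := fμ.1 X with hW
    obtain ⟨hΔ1, hΔ2, hΔ3⟩ := shiftBlock_spec d ε hε W
    have hΔR1 : (1:ℝ) ≤ ((shiftBlock d d ε W 0 : ℕ) : ℝ) := by exact_mod_cast hΔ1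
    have hΔR2 : ((shiftBlock d d ε W 0 : ℕ) : ℝ) ≤ (d : ℝ) + 1 := by exact_mod_cast hΔ2
    have hv : vtree O w X =
        if ∃ j, |W j - fμ.2 j| > ε then none
        else some ⟨(shiftBlock d d ε W 0 - 1) % (d + 1), Nat.mod_lt _ (Nat.succ_pos d)⟩ := by
      rw [vtree]
      simp only [hdec]
      rfl
    have hvne : vtree O w X ≠ none := by
      apply hnn
      rw [List.foldl_cons]
      exact mem_foldl_append _ Xs (w ++ [vtree O w X]) _ (by simp)
    have hclose : ∀ j, |W j - fμ.2 j| ≤ ε := by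
      by_contra hcon
      push_neg at hcon
      obtain ⟨j, hj⟩ := hcon
      exact hvne (by rw [hv, if_pos ⟨j, hj⟩])
    have hvsome : vtree O w X =
        some ⟨(shiftBlock d d ε W 0 - 1) % (d + 1), Nat.mod_lt _ (Nat.succ_pos d)⟩ := by
      rw [hv, if_neg]
      push_neg
      exact hclose
    set Y : Fin d → ℝ := fun j : Fin d =>
      roundMid (2 * ε * (d + 1))
        (W j + 2 * (shiftBlock d d ε W ((j : ℕ) / d)) * ε) with hY
    have hmod : (shiftBlock d d ε W 0 - 1) % (d + 1) + 1 = shiftBlock d d ε W 0 := by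
      rw [Nat.mod_eq_of_lt (by omega)]
      omega
    have hcoord : ∀ j : Fin d,
        Y j = roundMid (2 * ε * (d + 1))
          (fμ.2 j + 2 * ((((shiftBlock d d ε W 0 - 1) % (d + 1)) + 1 : ℕ) : ℝ) * ε) ∧
        |Y j - fμ.2 j| ≤ (3 * (d : ℝ) + 5) * ε := by
      intro j
      have hj0 : (j : ℕ) / d = 0 := Nat.div_eq_of_lt j.isLt
      obtain ⟨m, hm1, hm2⟩ := hΔ3 j
      have hcj := hclose j
      rw [abs_le] at hcj
      have hYj : Y j = 2 * ε * (d + 1) * m + (2 * ε * (d + 1)) / 2 := by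
        rw [hY]
        simp only [hj0]
        exact roundMid_eq m hL (by nlinarith) (by nlinarith)
      have hdecj : roundMid (2 * ε * (d + 1))
          (fμ.2 j + 2 * ((((shiftBlock d d ε W 0 - 1) % (d + 1)) + 1 : ℕ) : ℝ) * ε)
          = 2 * ε * (d + 1) * m + (2 * ε * (d + 1)) / 2 := by
        rw [hmod]
        exact roundMid_eq m hL (by nlinarith) (by nlinarith)
      constructor
      · rw [hYj, hdecj]
      · rw [hYj, abs_le]
        constructor <;> nlinarith
    have hdec' : decodeYs O (w ++ [vtree O w X]) =
        (h ++ [(Y, fμ.2)]).map Prod.fst := by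
      rw [hvsome, decodeYs, List.foldl_append]
      rw [show (List.foldl _ [] w) = decodeYs O w from rfl, List.foldl_cons, List.foldl_nil,
        hdec]
      rw [List.map_append]
      congr 1
      simp only [List.map_cons, List.map_nil]
      congr 1
      funext j
      exact ((hcoord j).1).symm
    have hbd' : ∀ p ∈ h ++ [(Y, fμ.2)], ∀ j : Fin d,
        |p.1 j - p.2 j| ≤ (3 * (d : ℝ) + 5) * ε := by
      intro p hp j
      rcases List.mem_append.1 hp with hp | hp
      · exact hbd p hp j
      · simp at hp
        rw [hp]
        exact (hcoord j).2
    have hnn' : ∀ σ ∈ Xs.foldl (fun w X => w ++ [vtree O w X]) (w ++ [vtree O w X]),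
        σ ≠ none := by
      intro σ hσ
      apply hnn
      rw [List.foldl_cons]
      exact hσ
    have := ih (w ++ [vtree O w X]) (h ++ [(Y, fμ.2)]) hdec' hnn' hbd'
    intro p hp j
    apply this p _ j
    rw [List.foldl_cons] at hp
    exact hp

/-- for every deterministic owner `O` there is a `(k,n,Σ)` block
decision tree (`Σ = {1,…,d+1} ∪ {⊥}`, coded as `Option (Fin (d+1))` with `none = ⊥`)
certifying correctness of `O ↔ S₀`: (1) at every node, the probability of moving to
the `⊥`-child is at most `δ`; (2) whenever the computation path contains no `⊥`,
the interaction `O ↔ S₀(X_1,…,X_k)` satisfies `max_i ‖Y_i − μ_i‖_∞ ≤ (3d+5)ε`. -/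
theorem certification_tree (n k d : ℕ) (hn : 0 < n) (hk : 0 < k) (hd : 0 < d)
    (ε δ : ℝ) (hε : 0 < ε) (hδ0 : 0 < δ) (hδ : δ < 1 / 2)
    (O : Owner n k d ε δ) :
    ∃ v : List (Option (Fin (d + 1))) → (Fin n → Bool) → Option (Fin (d + 1)),
      (∀ w : List (Option (Fin (d + 1))), w.length < k →
        pr (fun X : Fin n → Bool => v w X = none) ≤ δ) ∧
      (∀ Xs : List (Fin n → Bool), Xs.length = k →
        (∀ σ ∈ treeOutList v Xs, σ ≠ none) →
        ∀ p ∈ runS0 n d d k ε δ O Xs, ∀ j : Fin d,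
          |p.1 j - p.2 j| ≤ (3 * (d : ℝ) + 5) * ε) := by
  refine ⟨vtree O, ?_, ?_⟩
  · intro w hw
    have hlen : (decodeYs O w).length < k := by
      have := foldl_append_length
        (fun (ys : List (Fin d → ℝ)) (σ : Option (Fin (d + 1))) => fun j : Fin d =>
          match σ with
          | none => 0
          | some Δ => roundMid (2 * ε * (d + 1))
              ((O.act ys).2 j + 2 * (((Δ : ℕ) + 1 : ℕ) : ℝ) * ε)) w []
      rw [show (decodeYs O w).length = w.length from by simpa [decodeYs] using this]
      exact hw
    have hconc := O.conc (decodeYs O w) hlen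
    unfold Concentrated at hconc
    have heq : (fun X : Fin n → Bool => vtree O w X = none) =
        (fun X : Fin n → Bool =>
          ∃ j, |(O.act (decodeYs O w)).1 X j - (O.act (decodeYs O w)).2 j| > ε) := by
      funext X
      by_cases hc : ∃ j, |(O.act (decodeYs O w)).1 X j - (O.act (decodeYs O w)).2 j| > ε
      · simp [vtree, if_pos hc, hc]
      · simp [vtree, if_neg hc, hc]
    rw [heq]
    exact hconc
  · intro Xs hlen hnn p hp j
    exact main_inv n k d ε δ hε O Xs [] [] rfl hnn (by simp) p hp j
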